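/- (Robustness to envelope perturbation, coefficient recovery) In the setting of the envelope-perturbation theorem, letting \hat{x}_S solve the restricted Lasso \min_x (1/2)\|\tilde{y} - B_S x\|_2^2 + \lambda\|x\|_1 with \tilde{y} = E y and y = B_S x_S^*, one has the sup-norm error bound \|\hat{x}_S - x_S^*\|_\infty \le \max_i |e_i - 1| \cdot \|(B_S^T B_S)^{-1} B_S^T\|_\infty \|y\|_\infty + \lambda \|(B_S^T B_S)^{-1}\|_\infty. In particular, any coordinate of x_S^* with absolute value exceeding this bound corresponds to a nonzero coordinate of \hat{x}_S. -/

import Mathlib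

/-- The (restricted) Lasso objective `F(x) = (1/2)‖ỹ - B_S x‖₂² + λ‖x‖₁`. -/
noncomputable def lassoObjective {N n : ℕ} (B : Matrix (Fin N) (Fin n) ℝ)
    (y : Fin N → ℝ) (lam : ℝ) (x : Fin n → ℝ) : ℝ :=
  (1 / 2) * ∑ i, (y i - B.mulVec x i) ^ 2 + lam * ∑ j, |x j|

/-- The maximum absolute row sum norm `‖A‖_∞ = max_i ∑_j |A i j|` of a matrix,
expressed as the sup norm of the vector of absolute row sums. -/
noncomputable def rowSumNorm {m n : ℕ} (A : Matrix (Fin m) (Fin n) ℝ) : ℝ :=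
  ‖fun i : Fin m => ∑ j, |A i j|‖

/-- Helper: if `a ≤ s * c` for all positive `s`, then `a ≤ 0`. -/
lemma le_zero_of_forall_le_mul {a c : ℝ} (h : ∀ s : ℝ, 0 < s → a ≤ s * c) : a ≤ 0 := by
  by_contra hpos
  push_neg at hpos
  rcases le_or_gt c 0 with hc | hc
  · have := h 1 one_pos; nlinarith
  · have h1 := h (a / (2 * c)) (by positivity)
    have h2 : a / (2 * c) * c = a / 2 := by field_simp
    rw [h2] at h1; linarith

/-- Helper: the sup norm of a matrix-vector product is bounded by the max
row-sum norm times the sup norm of the vector. -/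
lemma mulVec_norm_le {m n : ℕ} (A : Matrix (Fin m) (Fin n) ℝ) (v : Fin n → ℝ) :
    ‖A.mulVec v‖ ≤ rowSumNorm A * ‖v‖ := by
  have hr0 : (0:ℝ) ≤ rowSumNorm A * ‖v‖ :=
    mul_nonneg (norm_nonneg (fun i : Fin m => ∑ j, |A i j|)) (norm_nonneg _)
  rw [pi_norm_le_iff_of_nonneg hr0]
  intro i
  have h1 : ‖A.mulVec v i‖ = |∑ j, A i j * v j| := rfl
  have h2 : |∑ j, A i j * v j| ≤ ∑ j, |A i j| * ‖v‖ := by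
    refine (Finset.abs_sum_le_sum_abs _ _).trans (Finset.sum_le_sum fun j _ => ?_)
    rw [abs_mul]
    exact mul_le_mul_of_nonneg_left (norm_le_pi_norm v j) (abs_nonneg _)
  have h3 : (∑ j, |A i j| * ‖v‖) = (∑ j, |A i j|) * ‖v‖ := by
    rw [Finset.sum_mul]
  have h4 : (∑ j, |A i j|) ≤ rowSumNorm A := by
    have := norm_le_pi_norm (fun i : Fin m => ∑ j, |A i j|) i
    rwa [Real.norm_eq_abs, abs_of_nonneg (Finset.sum_nonneg fun j _ => abs_nonneg _)] at this
  calc ‖A.mulVec v i‖ = |∑ j, A i j * v j| := h1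
    _ ≤ (∑ j, |A i j|) * ‖v‖ := by rw [← h3]; exact h2
    _ ≤ rowSumNorm A * ‖v‖ := mul_le_mul_of_nonneg_right h4 (norm_nonneg v)

/-- Robustness to envelope perturbation (coefficient recovery).  Let `B_S` have
full column rank, `y = B_S x_S^*`, `ỹ = E y` with `E = diag(e)`, and let `x̂_S`
minimize the restricted Lasso `(1/2)‖ỹ - B_S x‖₂² + λ‖x‖₁`.  Then
`‖x̂_S - x_S^*‖_∞ ≤ max_i |e_i - 1| · ‖(B_Sᵀ B_S)⁻¹ B_Sᵀ‖_∞ ‖y‖_∞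
  + λ ‖(B_Sᵀ B_S)⁻¹‖_∞`,
and any coordinate of `x_S^*` whose absolute value exceeds this bound corresponds
to a nonzero coordinate of `x̂_S`. -/
theorem lasso_envelope_robust_recovery
    {N n : ℕ} (BS : Matrix (Fin N) (Fin n) ℝ)
    (hrank : BS.rank = n)
    (xSstar : Fin n → ℝ) (y : Fin N → ℝ) (hy : y = BS.mulVec xSstar)
    (e : Fin N → ℝ) (ytilde : Fin N → ℝ) (hyt : ytilde = fun i => e i * y i)
    (lam : ℝ) (hlam : 0 < lam)
    (xhat : Fin n → ℝ)
    (hmin : ∀ x, lassoObjective BS ytilde lam xhat ≤ lassoObjective BS ytilde lam x) :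
    ‖xhat - xSstar‖
      ≤ ‖fun i => e i - 1‖ * (rowSumNorm ((BS.transpose * BS)⁻¹ * BS.transpose) * ‖y‖)
        + lam * rowSumNorm (BS.transpose * BS)⁻¹ ∧
    ∀ j : Fin n,
      ‖fun i => e i - 1‖ * (rowSumNorm ((BS.transpose * BS)⁻¹ * BS.transpose) * ‖y‖)
          + lam * rowSumNorm (BS.transpose * BS)⁻¹ < |xSstar j| →
        xhat j ≠ 0 := by
  classical
  set M : Matrix (Fin n) (Fin n) ℝ := BS.transpose * BS with hM
  -- the (negative of the) gradient of the smooth part at xhat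
  set g : Fin n → ℝ := M.mulVec xhat - BS.transpose.mulVec ytilde with hg
  -- KKT: |g j| ≤ lam for every j
  have hkkt : ∀ j : Fin n, |g j| ≤ lam := by
    intro j
    set r : Fin N → ℝ := fun i => ytilde i - BS.mulVec xhat i with hr
    set S : ℝ := ∑ i, BS i j * r i with hS
    set c : ℝ := ∑ i, (BS i j) ^ 2 with hc
    have hcnn : 0 ≤ c := Finset.sum_nonneg fun i _ => sq_nonneg _
    have hgj : g j = -S := by
      simp only [hg, hS, Pi.sub_apply, Matrix.mulVec, dotProduct,
        Matrix.transpose_apply, hM, Matrix.mul_apply, hr, ← Finset.sum_neg_distrib]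
      rw [show (∑ k, (∑ i, BS i j * BS i k) * xhat k)
          = ∑ i, BS i j * (∑ k, BS i k * xhat k) from by
        simp only [Finset.sum_mul, Finset.mul_sum, mul_assoc]
        exact Finset.sum_comm]
      rw [← Finset.sum_sub_distrib]
      exact Finset.sum_congr rfl fun i _ => by ring
    -- key inequality from minimality along coordinate directions
    have key : ∀ t : ℝ,
        0 ≤ -(t * S) + t ^ 2 / 2 * c + lam * (|xhat j + t| - |xhat j|) := by
      intro t
      set x' : Fin n → ℝ := Function.update xhat j (xhat j + t) with hx'
      have hmv : ∀ i, BS.mulVec x' i = BS.mulVec xhat i + BS i j * t := by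
        intro i
        have h1 : (∑ k, BS i k * x' k)
            = BS i j * (xhat j + t) + ∑ k ∈ Finset.univ.erase j, BS i k * xhat k := by
          rw [← Finset.add_sum_erase Finset.univ (fun k => BS i k * x' k) (Finset.mem_univ j)]
          congr 1
          · simp [hx']
          · exact Finset.sum_congr rfl fun k hk => by
              rw [hx', Function.update_of_ne (Finset.ne_of_mem_erase hk)]
        have h2 : (∑ k, BS i k * xhat k)
            = BS i j * xhat j + ∑ k ∈ Finset.univ.erase j, BS i k * xhat k :=
          (Finset.add_sum_erase Finset.univ (fun k => BS i k * xhat k) (Finset.mem_univ j)).symm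
        show (∑ k, BS i k * x' k) = (∑ k, BS i k * xhat k) + BS i j * t
        rw [h1, h2]; ring
      have habs : (∑ k, |x' k|) = (∑ k, |xhat k|) - |xhat j| + |xhat j + t| := by
        have h1 : (∑ k, |x' k|)
            = |xhat j + t| + ∑ k ∈ Finset.univ.erase j, |xhat k| := by
          rw [← Finset.add_sum_erase Finset.univ (fun k => |x' k|) (Finset.mem_univ j)]
          congr 1
          · simp [hx']
          · exact Finset.sum_congr rfl fun k hk => by
              rw [hx', Function.update_of_ne (Finset.ne_of_mem_erase hk)]
        have h2 : (∑ k, |xhat k|)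
            = |xhat j| + ∑ k ∈ Finset.univ.erase j, |xhat k| :=
          (Finset.add_sum_erase Finset.univ (fun k => |xhat k|) (Finset.mem_univ j)).symm
        rw [h1, h2]; ring
      have hquad : (∑ i, (ytilde i - BS.mulVec x' i) ^ 2)
          = (∑ i, (ytilde i - BS.mulVec xhat i) ^ 2) - 2 * t * S + t ^ 2 * c := by
        have hterm : ∀ i, (ytilde i - BS.mulVec x' i) ^ 2
            = (ytilde i - BS.mulVec xhat i) ^ 2 - 2 * t * (BS i j * r i)
              + t ^ 2 * (BS i j) ^ 2 := by
          intro i; rw [hmv i]; simp only [hr]; ring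
        rw [Finset.sum_congr rfl fun i _ => hterm i]
        rw [Finset.sum_add_distrib, Finset.sum_sub_distrib, ← Finset.mul_sum, ← Finset.mul_sum]
      have hkey := hmin x'
      simp only [lassoObjective] at hkey
      rw [hquad, habs] at hkey
      nlinarith [hkey]
    have hub : S ≤ lam := by
      have : S - lam ≤ 0 := by
        apply le_zero_of_forall_le_mul (c := c / 2)
        intro s hs
        have h1 := key s
        have h2 : |xhat j + s| - |xhat j| ≤ s := by
          have := abs_add_le (xhat j) s
          rw [abs_of_pos hs] at this; linarith
        nlinarith [mul_le_mul_of_nonneg_left h2 hlam.le]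
      linarith
    have hlb : -lam ≤ S := by
      have : -S - lam ≤ 0 := by
        apply le_zero_of_forall_le_mul (c := c / 2)
        intro s hs
        have h1 := key (-s)
        have h2 : |xhat j + -s| - |xhat j| ≤ s := by
          have := abs_sub_abs_le_abs_sub (xhat j + -s) (xhat j)
          have h3 : |xhat j + -s - xhat j| = s := by
            rw [show xhat j + -s - xhat j = -s by ring, abs_neg, abs_of_pos hs]
          linarith
        nlinarith [mul_le_mul_of_nonneg_left h2 hlam.le]
      linarith
    rw [hgj, abs_neg]
    exact abs_le.mpr ⟨hlb, hub⟩
  have hgnorm : ‖g‖ ≤ lam := by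
    rw [pi_norm_le_iff_of_nonneg hlam.le]
    intro j
    exact hkkt j
  -- invertibility of M
  have hMrank : M.rank = n := by rw [hM, Matrix.rank_transpose_mul_self, hrank]
  have hsurj : Function.Surjective M.mulVec := by
    have hr : LinearMap.range M.mulVecLin = ⊤ := by
      apply Submodule.eq_top_of_finrank_eq
      have : Module.finrank ℝ ↥(LinearMap.range M.mulVecLin) = M.rank := rfl
      rw [this, hMrank, Module.finrank_fin_fun]
    intro v
    obtain ⟨w, hw⟩ := LinearMap.range_eq_top.mp hr v
    exact ⟨w, hw⟩
  have hunit : IsUnit M := Matrix.mulVec_surjective_iff_isUnit.mp hsurj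
  have hdet : IsUnit M.det := (Matrix.isUnit_iff_isUnit_det _).mp hunit
  have hinv : M⁻¹ * M = 1 := Matrix.nonsing_inv_mul M hdet
  -- key decomposition
  have heq : xhat - xSstar
      = (M⁻¹ * BS.transpose).mulVec (ytilde - y) + M⁻¹.mulVec g := by
    have h1 : M.mulVec (xhat - xSstar) = BS.transpose.mulVec (ytilde - y) + g := by
      have hx : M.mulVec xhat = BS.transpose.mulVec ytilde + g := by
        rw [hg]; abel
      have hxs : M.mulVec xSstar = BS.transpose.mulVec y := by
        rw [hM, ← Matrix.mulVec_mulVec, ← hy]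
      rw [Matrix.mulVec_sub, hx, hxs, Matrix.mulVec_sub]
      abel
    calc xhat - xSstar = (M⁻¹ * M).mulVec (xhat - xSstar) := by
          rw [hinv, Matrix.one_mulVec]
      _ = M⁻¹.mulVec (M.mulVec (xhat - xSstar)) := by rw [Matrix.mulVec_mulVec]
      _ = M⁻¹.mulVec (BS.transpose.mulVec (ytilde - y) + g) := by rw [h1]
      _ = (M⁻¹ * BS.transpose).mulVec (ytilde - y) + M⁻¹.mulVec g := by
          rw [Matrix.mulVec_add, Matrix.mulVec_mulVec]
  -- bound on ‖ytilde - y‖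
  have hyty : ‖ytilde - y‖ ≤ ‖fun i => e i - 1‖ * ‖y‖ := by
    rw [pi_norm_le_iff_of_nonneg (by positivity)]
    intro i
    have h1 : (ytilde - y) i = (e i - 1) * y i := by
      simp [hyt]; ring
    rw [h1, Real.norm_eq_abs, abs_mul]
    exact mul_le_mul (norm_le_pi_norm (fun i => e i - 1) i) (norm_le_pi_norm y i)
      (abs_nonneg _) (norm_nonneg _)
  -- the main bound
  have hbound : ‖xhat - xSstar‖
      ≤ ‖fun i => e i - 1‖ * (rowSumNorm ((BS.transpose * BS)⁻¹ * BS.transpose) * ‖y‖)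
        + lam * rowSumNorm (BS.transpose * BS)⁻¹ := by
    rw [heq]
    refine (norm_add_le _ _).trans ?_
    have t1 : ‖(M⁻¹ * BS.transpose).mulVec (ytilde - y)‖
        ≤ rowSumNorm (M⁻¹ * BS.transpose) * (‖fun i => e i - 1‖ * ‖y‖) := by
      refine (mulVec_norm_le _ _).trans ?_
      exact mul_le_mul_of_nonneg_left hyty (norm_nonneg _)
    have t2 : ‖M⁻¹.mulVec g‖ ≤ rowSumNorm M⁻¹ * lam := by
      refine (mulVec_norm_le _ _).trans ?_
      exact mul_le_mul_of_nonneg_left hgnorm (norm_nonneg _)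
    rw [hM] at t1 t2 ⊢
    nlinarith [t1, t2]
  refine ⟨hbound, fun j hj h0 => ?_⟩
  have h1 : |xSstar j| ≤ ‖xhat - xSstar‖ := by
    have := norm_le_pi_norm (xhat - xSstar) j
    rw [Pi.sub_apply, h0, Real.norm_eq_abs, zero_sub, abs_neg] at this
    exact this
  linarith [hbound, hj, h1]
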